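/- Exact tripartition prediction: let ψ = min(ψ_p, ψ_d) where ψ_p = inf over primal solutions of min{x*_i : x*_i > 0} and ψ_d = inf over dual solutions of min{s*_i : s*_i > 0}, and assume ψ > 0. Set C = ψ/2, fix λ with 0 < ‖λ‖ < min(1, ψ/(16 max(τ_p,τ_d))), and let (x,y,s) ∈ N̄(γ,λ) with 0 < μ_λ < min(1, (ψ/(4 max(τ_p,τ_d) C₂))²). Then there exists an optimal solution (x*,y*,s*) of the original QP such that {i : s_i ≥ C} = {i : s*_i > 0}, {i : x_i ≥ C} = {i : x*_i > 0}, and the complements agree: {1,…,n}\({i : s_i ≥ C} ∪ {i : x_i ≥ C}) = {1,…,n}\({i : s*_i > 0} ∪ {i : x*_i > 0}). -/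

import Mathlib

open Matrix

/-- Euclidean norm of a finite real vector. -/
noncomputable def eucNorm {ι : Type*} [Fintype ι] (v : ι → ℝ) : ℝ :=
  Real.sqrt (∑ i, v i ^ 2)

/-- Perturbed duality measure `μ_λ = (x+λ)ᵀ(s+λ)/n`. -/
noncomputable def muLam {n : ℕ} (lam x s : Fin n → ℝ) : ℝ :=
  (∑ i, (x i + lam i) * (s i + lam i)) / n

/-- Membership in the symmetric neighbourhood `N̄(γ, λ)` of the perturbed
central path. -/
def InSymNbhd {m n : ℕ} (H : Matrix (Fin n) (Fin n) ℝ)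
    (A : Matrix (Fin m) (Fin n) ℝ) (b : Fin m → ℝ) (c : Fin n → ℝ)
    (γ : ℝ) (lam x s : Fin n → ℝ) (y : Fin m → ℝ) : Prop :=
  A.mulVec x = b ∧ Aᵀ.mulVec y + s - H.mulVec x = c ∧
  (∀ i, 0 < x i + lam i) ∧ (∀ i, 0 < s i + lam i) ∧
  ∀ i, γ * muLam lam x s ≤ (x i + lam i) * (s i + lam i) ∧
    (x i + lam i) * (s i + lam i) ≤ muLam lam x s / γ

/-- The KKT conditions of the original QP. -/
def KKT {m n : ℕ} (H : Matrix (Fin n) (Fin n) ℝ) (A : Matrix (Fin m) (Fin n) ℝ)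
    (b : Fin m → ℝ) (c : Fin n → ℝ)
    (xs : Fin n → ℝ) (ys : Fin m → ℝ) (ss : Fin n → ℝ) : Prop :=
  A.mulVec xs = b ∧ Aᵀ.mulVec ys + ss - H.mulVec xs = c ∧
  (∀ i, xs i * ss i = 0) ∧ 0 ≤ xs ∧ 0 ≤ ss

/-- `C₂ = √(n/γ) + n`. -/
noncomputable def C2 (n : ℕ) (γ : ℝ) : ℝ := Real.sqrt (n / γ) + n

/-- The proximity bound `C₂ √μ_λ max(√μ_λ, 1) + 4‖λ‖ max(‖λ‖, 1)`. -/
noncomputable def proxBound {n : ℕ} (γ : ℝ) (lam x s : Fin n → ℝ) : ℝ :=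
  C2 n γ * Real.sqrt (muLam lam x s) * max (Real.sqrt (muLam lam x s)) 1
    + 4 * eucNorm lam * max (eucNorm lam) 1
lemma abs_le_enorm {ι : Type*} [Fintype ι] (v : ι → ℝ) (i : ι) : |v i| ≤ eucNorm v := by
  rw [eucNorm, ← Real.sqrt_sq_eq_abs]
  exact Real.sqrt_le_sqrt (Finset.single_le_sum (fun j _ => sq_nonneg (v j)) (Finset.mem_univ i))

lemma enorm_nonneg' {ι : Type*} [Fintype ι] (v : ι → ℝ) : 0 ≤ eucNorm v :=
  Real.sqrt_nonneg _

/-- Exact tripartition prediction: let `ψ = min(ψ_p, ψ_d)` where `ψ_p` (resp.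
`ψ_d`) is the infimum of the positive components over primal (resp. dual)
optimal solutions, and assume `ψ > 0`. Set `C = ψ/2`, fix `λ` with
`0 < ‖λ‖ < min(1, ψ/(16 max(τ_p,τ_d)))`, and let `(x,y,s) ∈ N̄(γ,λ)` with
`0 < μ_λ < min(1, (ψ/(4 max(τ_p,τ_d) C₂))²)`. Then there is an optimal solution
`(x*,y*,s*)` of the original QP with `{i : sᵢ ≥ C} = {i : s*ᵢ > 0}`,
`{i : xᵢ ≥ C} = {i : x*ᵢ > 0}`, and the complements agree. -/
theorem exact_tripartition_prediction {m n : ℕ}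
    (H : Matrix (Fin n) (Fin n) ℝ) (A : Matrix (Fin m) (Fin n) ℝ)
    (b : Fin m → ℝ) (c : Fin n → ℝ) (hH : H.PosSemidef)
    (γ : ℝ) (hγ : γ ∈ Set.Ioo (0 : ℝ) 1)
    (τp τd : ℝ) (hτp : 0 < τp) (hτd : 0 < τd)
    (ψp ψd ψ : ℝ)
    (hψp : ψp = sInf {v : ℝ | ∃ (xs : Fin n → ℝ) (ys : Fin m → ℝ) (ss : Fin n → ℝ)
      (i : Fin n), KKT H A b c xs ys ss ∧ 0 < xs i ∧ v = xs i})
    (hψd : ψd = sInf {v : ℝ | ∃ (xs : Fin n → ℝ) (ys : Fin m → ℝ) (ss : Fin n → ℝ)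
      (i : Fin n), KKT H A b c xs ys ss ∧ 0 < ss i ∧ v = ss i})
    (hψ : ψ = min ψp ψd) (hψpos : 0 < ψ)
    (lam : Fin n → ℝ) (hlam : 0 ≤ lam) (hlam0 : 0 < eucNorm lam)
    (hlamub : eucNorm lam < min 1 (ψ / (16 * max τp τd)))
    (x : Fin n → ℝ) (y : Fin m → ℝ) (s : Fin n → ℝ)
    (hmem : InSymNbhd H A b c γ lam x s y)
    (hmu0 : 0 < muLam lam x s)
    (hmu : muLam lam x s < min 1 ((ψ / (4 * max τp τd * C2 n γ)) ^ 2))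
    (hprox : ∃ (xs : Fin n → ℝ) (ys : Fin m → ℝ) (ss : Fin n → ℝ),
      KKT H A b c xs ys ss ∧
      eucNorm (x - xs) < τp * proxBound γ lam x s ∧
      eucNorm (s - ss) < τd * proxBound γ lam x s) :
    ∃ (xs : Fin n → ℝ) (ys : Fin m → ℝ) (ss : Fin n → ℝ),
      KKT H A b c xs ys ss ∧
      {i : Fin n | ψ / 2 ≤ s i} = {i : Fin n | 0 < ss i} ∧
      {i : Fin n | ψ / 2 ≤ x i} = {i : Fin n | 0 < xs i} ∧
      Set.univ \ ({i : Fin n | ψ / 2 ≤ s i} ∪ {i : Fin n | ψ / 2 ≤ x i})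
        = Set.univ \ ({i : Fin n | 0 < ss i} ∪ {i : Fin n | 0 < xs i}) := by

  obtain ⟨xs, ys, ss, hKKT, hx, hs⟩ := hprox
  set M := max τp τd with hM
  have hMpos : 0 < M := lt_max_of_lt_left hτp
  rcases Nat.eq_zero_or_pos n with hn | hn
  · exfalso
    have hc2 : C2 n γ = 0 := by subst hn; simp [C2]
    have h0 : (ψ / (4 * M * C2 n γ)) ^ 2 = 0 := by rw [hc2]; simp
    have := lt_of_lt_of_le hmu (min_le_right _ _)
    rw [h0] at this
    linarith
  have hC2 : (1:ℝ) ≤ C2 n γ := by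
    have h1 : (1:ℝ) ≤ (n:ℝ) := by exact_mod_cast hn
    have h0 : 0 ≤ Real.sqrt ((n:ℝ)/γ) := Real.sqrt_nonneg _
    unfold C2; linarith
  have hC2pos : 0 < C2 n γ := lt_of_lt_of_le one_pos hC2
  set μ := muLam lam x s with hμdef
  have hμ1 : μ < 1 := lt_of_lt_of_le hmu (min_le_left _ _)
  have hμ2 : μ < (ψ / (4 * M * C2 n γ)) ^ 2 := lt_of_lt_of_le hmu (min_le_right _ _)
  have hr : 0 < ψ / (4 * M * C2 n γ) := div_pos hψpos (by positivity)
  have hsq : Real.sqrt μ < ψ / (4 * M * C2 n γ) := by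
    have h := Real.sqrt_lt_sqrt hmu0.le hμ2
    rwa [Real.sqrt_sq hr.le] at h
  have hsq1 : Real.sqrt μ < 1 := by
    have h := Real.sqrt_lt_sqrt hmu0.le hμ1
    rwa [Real.sqrt_one] at h
  have hmax : max (Real.sqrt μ) 1 = 1 := max_eq_right hsq1.le
  have hlam1 : eucNorm lam < 1 := lt_of_lt_of_le hlamub (min_le_left _ _)
  have hlam2 : eucNorm lam < ψ / (16 * M) := lt_of_lt_of_le hlamub (min_le_right _ _)
  have hmaxl : max (eucNorm lam) 1 = 1 := max_eq_right hlam1.le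
  have hPB : proxBound γ lam x s < ψ / (2 * M) := by
    unfold proxBound
    rw [← hμdef, hmax, hmaxl, mul_one, mul_one]
    have h1 : C2 n γ * Real.sqrt μ < ψ / (4 * M) := by
      calc C2 n γ * Real.sqrt μ < C2 n γ * (ψ / (4 * M * C2 n γ)) :=
            (mul_lt_mul_iff_right₀ hC2pos).2 hsq
        _ = ψ / (4 * M) := by field_simp
    have h2 : 4 * eucNorm lam < ψ / (4 * M) := by
      have he : 4 * (ψ / (16 * M)) = ψ / (4 * M) := by field_simp; ring
      linarith
    have he2 : ψ / (2 * M) = ψ / (4 * M) + ψ / (4 * M) := by field_simp; ring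
    linarith
  have hPBpos : 0 < proxBound γ lam x s := by
    by_contra hneg
    push_neg at hneg
    have h1 : τp * proxBound γ lam x s ≤ 0 := mul_nonpos_of_nonneg_of_nonpos hτp.le hneg
    have h2 := lt_of_le_of_lt (enorm_nonneg' (x - xs)) hx
    linarith
  have hxb : eucNorm (x - xs) < ψ / 2 := by
    have h1 : τp * proxBound γ lam x s ≤ M * proxBound γ lam x s :=
      mul_le_mul_of_nonneg_right (le_max_left _ _) hPBpos.le
    have h2 : M * proxBound γ lam x s < M * (ψ / (2 * M)) :=
      (mul_lt_mul_iff_right₀ hMpos).2 hPB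
    have h3 : M * (ψ / (2 * M)) = ψ / 2 := by field_simp
    linarith
  have hsb : eucNorm (s - ss) < ψ / 2 := by
    have h1 : τd * proxBound γ lam x s ≤ M * proxBound γ lam x s :=
      mul_le_mul_of_nonneg_right (le_max_right _ _) hPBpos.le
    have h2 : M * proxBound γ lam x s < M * (ψ / (2 * M)) :=
      (mul_lt_mul_iff_right₀ hMpos).2 hPB
    have h3 : M * (ψ / (2 * M)) = ψ / 2 := by field_simp
    linarith
  have hxc : ∀ i, |x i - xs i| < ψ / 2 := fun i =>
    lt_of_le_of_lt (by simpa using abs_le_enorm (x - xs) i) hxb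
  have hsc : ∀ i, |s i - ss i| < ψ / 2 := fun i =>
    lt_of_le_of_lt (by simpa using abs_le_enorm (s - ss) i) hsb
  have hψd_le : ∀ i, 0 < ss i → ψ ≤ ss i := by
    intro i hi
    have hbdd : BddBelow {v : ℝ | ∃ (xs : Fin n → ℝ) (ys : Fin m → ℝ) (ss : Fin n → ℝ)
        (i : Fin n), KKT H A b c xs ys ss ∧ 0 < ss i ∧ v = ss i} := by
      refine ⟨0, ?_⟩
      rintro v ⟨_, _, _, _, _, hpos, rfl⟩
      exact hpos.le
    have hmem' : ss i ∈ {v : ℝ | ∃ (xs : Fin n → ℝ) (ys : Fin m → ℝ) (ss : Fin n → ℝ)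
        (i : Fin n), KKT H A b c xs ys ss ∧ 0 < ss i ∧ v = ss i} :=
      ⟨xs, ys, ss, i, hKKT, hi, rfl⟩
    calc ψ ≤ ψd := hψ ▸ min_le_right _ _
      _ ≤ ss i := hψd ▸ csInf_le hbdd hmem'
  have hψp_le : ∀ i, 0 < xs i → ψ ≤ xs i := by
    intro i hi
    have hbdd : BddBelow {v : ℝ | ∃ (xs : Fin n → ℝ) (ys : Fin m → ℝ) (ss : Fin n → ℝ)
        (i : Fin n), KKT H A b c xs ys ss ∧ 0 < xs i ∧ v = xs i} := by
      refine ⟨0, ?_⟩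
      rintro v ⟨_, _, _, _, _, hpos, rfl⟩
      exact hpos.le
    have hmem' : xs i ∈ {v : ℝ | ∃ (xs : Fin n → ℝ) (ys : Fin m → ℝ) (ss : Fin n → ℝ)
        (i : Fin n), KKT H A b c xs ys ss ∧ 0 < xs i ∧ v = xs i} :=
      ⟨xs, ys, ss, i, hKKT, hi, rfl⟩
    calc ψ ≤ ψp := hψ ▸ min_le_left _ _
      _ ≤ xs i := hψp ▸ csInf_le hbdd hmem'
  have hS : {i : Fin n | ψ / 2 ≤ s i} = {i : Fin n | 0 < ss i} := by
    ext i
    simp only [Set.mem_setOf_eq]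
    constructor
    · intro h
      by_contra hns
      have h0 : ss i = 0 := le_antisymm (not_lt.1 hns) (hKKT.2.2.2.2 i)
      have habs := hsc i
      rw [h0, sub_zero] at habs
      have := le_abs_self (s i)
      linarith
    · intro h
      have hpsi := hψd_le i h
      have habs := hsc i
      have := neg_abs_le (s i - ss i)
      linarith
  have hX : {i : Fin n | ψ / 2 ≤ x i} = {i : Fin n | 0 < xs i} := by
    ext i
    simp only [Set.mem_setOf_eq]
    constructor
    · intro h
      by_contra hns
      have h0 : xs i = 0 := le_antisymm (not_lt.1 hns) (hKKT.2.2.2.1 i)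
      have habs := hxc i
      rw [h0, sub_zero] at habs
      have := le_abs_self (x i)
      linarith
    · intro h
      have hpsi := hψp_le i h
      have habs := hxc i
      have := neg_abs_le (x i - xs i)
      linarith
  exact ⟨xs, ys, ss, hKKT, hS, hX, by rw [hS, hX]⟩
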